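/- For the vector fields X̂₁(q,p,u,v) = (sin p, 0, v·cos p, 0) and X̂₂(q,p,u,v) = (0, q, 0, u) on ℝ⁴ (the lifted standard-map model), one has [X̂₁,X̂₂](q,p,u,v) = (−q cos p, sin p, −u cos p + q v sin p, v cos p) and [X̂₁,[X̂₁,X̂₂]](q,p,u,v) = (−2 cos p sin p, 0, −2v cos 2p, 0); moreover the determinant of the 4×4 matrix (X̂₁, X̂₂, [X̂₁,X̂₂], [X̂₁,[X̂₁,X̂₂]]) at (π/3, π/3, √2/2, √2/2) equals (9 − √3·π)/16 ≠ 0. -/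

import Mathlib

open Real

/-- The Lie bracket of vector fields on `ℝ⁴`: `[X,Y](x) = DY(x)·X(x) − DX(x)·Y(x)`. -/
noncomputable def lieBracketR4 (X Y : (Fin 4 → ℝ) → (Fin 4 → ℝ)) (x : Fin 4 → ℝ) :
    Fin 4 → ℝ :=
  fderiv ℝ Y x (X x) - fderiv ℝ X x (Y x)

/-- Lifted shear vector field: `X̂₁(q,p,u,v) = (sin p, 0, v cos p, 0)`. -/
noncomputable def stdX1 (x : Fin 4 → ℝ) : Fin 4 → ℝ :=
  ![Real.sin (x 1), 0, x 3 * Real.cos (x 1), 0]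

/-- Lifted standard-map vector field: `X̂₂(q,p,u,v) = (0, q, 0, u)`. -/
noncomputable def stdX2 (x : Fin 4 → ℝ) : Fin 4 → ℝ :=
  ![0, x 0, 0, x 2]

/-- The point `(π/3, π/3, √2/2, √2/2)`. -/
noncomputable def stdPt : Fin 4 → ℝ :=
  ![Real.pi / 3, Real.pi / 3, Real.sqrt 2 / 2, Real.sqrt 2 / 2]

noncomputable def pr (i : Fin 4) : (Fin 4 → ℝ) →L[ℝ] ℝ := ContinuousLinearMap.proj i

lemma hasF_sin1 (x : Fin 4 → ℝ) :
    HasFDerivAt (fun x : Fin 4 → ℝ => Real.sin (x 1)) (Real.cos (x 1) • pr 1) x :=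
  (Real.hasDerivAt_sin (x 1)).comp_hasFDerivAt (f := fun y : Fin 4 → ℝ => y 1) x (hasFDerivAt_apply 1 x)

lemma hasF_cos1 (x : Fin 4 → ℝ) :
    HasFDerivAt (fun x : Fin 4 → ℝ => Real.cos (x 1)) (-Real.sin (x 1) • pr 1) x :=
  (Real.hasDerivAt_cos (x 1)).comp_hasFDerivAt (f := fun y : Fin 4 → ℝ => y 1) x (hasFDerivAt_apply 1 x)

lemma hasF_X1 (x : Fin 4 → ℝ) :
    HasFDerivAt stdX1 (ContinuousLinearMap.pi
      ![Real.cos (x 1) • pr 1, 0,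
        x 3 • (-Real.sin (x 1) • pr 1) + Real.cos (x 1) • pr 3, 0]) x := by
  rw [hasFDerivAt_pi']
  intro i
  fin_cases i <;>
    simp only [stdX1, Matrix.cons_val_zero, Matrix.cons_val_one, Matrix.head_cons,
      Matrix.cons_val_two, Matrix.tail_cons, Matrix.cons_val_three,
      ContinuousLinearMap.proj_pi, Fin.isValue]
  · exact hasF_sin1 x
  · exact hasFDerivAt_const 0 x
  · exact (hasFDerivAt_apply 3 x).mul (hasF_cos1 x)
  · exact hasFDerivAt_const 0 x

lemma hasF_X2 (x : Fin 4 → ℝ) :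
    HasFDerivAt stdX2 (ContinuousLinearMap.pi ![0, pr 0, 0, pr 2]) x := by
  rw [hasFDerivAt_pi']
  intro i
  fin_cases i <;>
    simp only [stdX2, Matrix.cons_val_zero, Matrix.cons_val_one, Matrix.head_cons,
      Matrix.cons_val_two, Matrix.tail_cons, Matrix.cons_val_three,
      ContinuousLinearMap.proj_pi, Fin.isValue]
  · exact hasFDerivAt_const 0 x
  · exact hasFDerivAt_apply 0 x
  · exact hasFDerivAt_const 0 x
  · exact hasFDerivAt_apply 2 x

lemma fderiv_X1_apply (x v : Fin 4 → ℝ) :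
    fderiv ℝ stdX1 x v =
      ![Real.cos (x 1) * v 1, 0,
        x 3 * (-Real.sin (x 1) * v 1) + Real.cos (x 1) * v 3, 0] := by
  rw [(hasF_X1 x).fderiv]
  funext i
  fin_cases i <;>
    simp [pr, ContinuousLinearMap.pi_apply] <;> ring

lemma fderiv_X2_apply (x v : Fin 4 → ℝ) :
    fderiv ℝ stdX2 x v = ![0, v 0, 0, v 2] := by
  rw [(hasF_X2 x).fderiv]
  funext i
  fin_cases i <;> simp [pr, ContinuousLinearMap.pi_apply]

/-- Explicit form of `[X₁,X₂]`. -/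
noncomputable def bExp (x : Fin 4 → ℝ) : Fin 4 → ℝ :=
  ![-(x 0) * Real.cos (x 1), Real.sin (x 1),
    -(x 2) * Real.cos (x 1) + x 0 * x 3 * Real.sin (x 1),
    x 3 * Real.cos (x 1)]

lemma bracket12 (x : Fin 4 → ℝ) : lieBracketR4 stdX1 stdX2 x = bExp x := by
  funext i
  simp only [lieBracketR4, Pi.sub_apply, fderiv_X1_apply, fderiv_X2_apply]
  fin_cases i <;> simp [stdX1, stdX2, bExp] <;> ring

lemma hasF_bExp (x : Fin 4 → ℝ) :
    HasFDerivAt bExp (ContinuousLinearMap.pi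
      ![(-(x 0)) • (-Real.sin (x 1) • pr 1) + Real.cos (x 1) • (-pr 0),
        Real.cos (x 1) • pr 1,
        ((-(x 2)) • (-Real.sin (x 1) • pr 1) + Real.cos (x 1) • (-pr 2)) +
          ((x 0 * x 3) • (Real.cos (x 1) • pr 1) +
            Real.sin (x 1) • (x 0 • pr 3 + x 3 • pr 0)),
        x 3 • (-Real.sin (x 1) • pr 1) + Real.cos (x 1) • pr 3]) x := by
  rw [hasFDerivAt_pi']
  intro i
  fin_cases i <;>
    simp only [bExp, Matrix.cons_val_zero, Matrix.cons_val_one, Matrix.head_cons,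
      Matrix.cons_val_two, Matrix.tail_cons, Matrix.cons_val_three,
      ContinuousLinearMap.proj_pi, Fin.isValue]
  · exact ((hasFDerivAt_apply 0 x).neg.mul (hasF_cos1 x))
  · exact hasF_sin1 x
  · exact (((hasFDerivAt_apply 2 x).neg.mul (hasF_cos1 x)).add
      (((hasFDerivAt_apply 0 x).mul (hasFDerivAt_apply 3 x)).mul (hasF_sin1 x)))
  · exact (hasFDerivAt_apply 3 x).mul (hasF_cos1 x)

lemma fderiv_bExp_apply (x v : Fin 4 → ℝ) :
    fderiv ℝ bExp x v =
      ![-(x 0) * (-Real.sin (x 1) * v 1) + Real.cos (x 1) * (-(v 0)),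
        Real.cos (x 1) * v 1,
        (-(x 2) * (-Real.sin (x 1) * v 1) + Real.cos (x 1) * (-(v 2))) +
          (x 0 * x 3 * (Real.cos (x 1) * v 1) +
            Real.sin (x 1) * (x 0 * v 3 + x 3 * v 0)),
        x 3 * (-Real.sin (x 1) * v 1) + Real.cos (x 1) * v 3] := by
  rw [(hasF_bExp x).fderiv]
  funext i
  fin_cases i <;>
    simp [pr, ContinuousLinearMap.pi_apply] <;> ring

lemma bracket112 (x : Fin 4 → ℝ) :
    lieBracketR4 stdX1 (lieBracketR4 stdX1 stdX2) x =
      ![-2 * Real.cos (x 1) * Real.sin (x 1), 0,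
        -2 * x 3 * Real.cos (2 * x 1), 0] := by
  have hB : lieBracketR4 stdX1 stdX2 = bExp := funext bracket12
  rw [hB]
  funext i
  simp only [lieBracketR4, Pi.sub_apply, fderiv_X1_apply, fderiv_bExp_apply]
  fin_cases i
  · simp [stdX1, bExp]; ring
  · simp [stdX1, bExp]
  · simp [stdX1, bExp, Real.cos_two_mul]
    linear_combination (2 * x 3) * Real.sin_sq_add_cos_sq (x 1)
  · simp [stdX1, bExp]

lemma det_fin_four' (A : Matrix (Fin 4) (Fin 4) ℝ) :
    A.det =
      A 0 0 * (A 1 1 * (A 2 2 * A 3 3 - A 2 3 * A 3 2)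
        - A 1 2 * (A 2 1 * A 3 3 - A 2 3 * A 3 1)
        + A 1 3 * (A 2 1 * A 3 2 - A 2 2 * A 3 1))
      - A 0 1 * (A 1 0 * (A 2 2 * A 3 3 - A 2 3 * A 3 2)
        - A 1 2 * (A 2 0 * A 3 3 - A 2 3 * A 3 0)
        + A 1 3 * (A 2 0 * A 3 2 - A 2 2 * A 3 0))
      + A 0 2 * (A 1 0 * (A 2 1 * A 3 3 - A 2 3 * A 3 1)
        - A 1 1 * (A 2 0 * A 3 3 - A 2 3 * A 3 0)
        + A 1 3 * (A 2 0 * A 3 1 - A 2 1 * A 3 0))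
      - A 0 3 * (A 1 0 * (A 2 1 * A 3 2 - A 2 2 * A 3 1)
        - A 1 1 * (A 2 0 * A 3 2 - A 2 2 * A 3 0)
        + A 1 2 * (A 2 0 * A 3 1 - A 2 1 * A 3 0)) := by
  rw [Matrix.det_succ_row_zero]
  have e1 : (Fin.succ 2 : Fin 4) = 3 := rfl
  have e2 : (Fin.castSucc 2 : Fin 4) = 2 := rfl
  simp [Fin.sum_univ_succ, Matrix.det_fin_three, Matrix.submatrix_apply,
    Fin.succAbove, e1, e2]
  ring

theorem standard_map_hormander_determinant :
    (∀ x : Fin 4 → ℝ, lieBracketR4 stdX1 stdX2 x =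
      ![-(x 0) * Real.cos (x 1), Real.sin (x 1),
        -(x 2) * Real.cos (x 1) + x 0 * x 3 * Real.sin (x 1),
        x 3 * Real.cos (x 1)]) ∧
    (∀ x : Fin 4 → ℝ, lieBracketR4 stdX1 (lieBracketR4 stdX1 stdX2) x =
      ![-2 * Real.cos (x 1) * Real.sin (x 1), 0,
        -2 * x 3 * Real.cos (2 * x 1), 0]) ∧
    (Matrix.of (fun i j : Fin 4 =>
        (![stdX1 stdPt, stdX2 stdPt,
           lieBracketR4 stdX1 stdX2 stdPt,
           lieBracketR4 stdX1 (lieBracketR4 stdX1 stdX2) stdPt] j) i)).det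
      = (9 - Real.sqrt 3 * Real.pi) / 16 ∧
    (Matrix.of (fun i j : Fin 4 =>
        (![stdX1 stdPt, stdX2 stdPt,
           lieBracketR4 stdX1 stdX2 stdPt,
           lieBracketR4 stdX1 (lieBracketR4 stdX1 stdX2) stdPt] j) i)).det ≠ 0 := by
  have hdet : (Matrix.of (fun i j : Fin 4 =>
        (![stdX1 stdPt, stdX2 stdPt,
           lieBracketR4 stdX1 stdX2 stdPt,
           lieBracketR4 stdX1 (lieBracketR4 stdX1 stdX2) stdPt] j) i)).det
      = (9 - Real.sqrt 3 * Real.pi) / 16 := by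
    have h2 : Real.sqrt 2 ^ 2 = 2 := Real.sq_sqrt (by norm_num)
    have h3 : Real.sqrt 3 ^ 2 = 3 := Real.sq_sqrt (by norm_num)
    have hc2 : Real.cos (2 * (Real.pi / 3)) = -(1/2) := by
      rw [Real.cos_two_mul, Real.cos_pi_div_three]; norm_num
    rw [det_fin_four']
    simp [bracket12, bracket112, stdX1, stdX2, bExp, stdPt, hc2,
      Real.sin_pi_div_three, Real.cos_pi_div_three]
    ring_nf
    rw [h2, h3]
    ring
  refine ⟨fun x => bracket12 x, fun x => bracket112 x, hdet, ?_⟩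
  rw [hdet]
  have hs3 : Real.sqrt 3 < 2 := by
    rw [show (2:ℝ) = Real.sqrt 4 by rw [show (4:ℝ) = 2^2 by norm_num, Real.sqrt_sq]; norm_num]
    exact Real.sqrt_lt_sqrt (by norm_num) (by norm_num)
  have hpi : Real.pi < 3.2 := by linarith [Real.pi_lt_d2]
  have : Real.sqrt 3 * Real.pi < 9 := by
    nlinarith [Real.sqrt_nonneg 3, Real.pi_pos]
  apply ne_of_gt
  apply div_pos _ (by norm_num)
  linarith
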